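/- arXiv:1209.3927 — 2 statements merged into one kernel-verified Lean document; each statement's English description precedes it below -/
import Mathlib

section
/- If u is a prefix of v, then ψ(u) is both a prefix and a suffix of ψ(v). -/
def palClosure (w : List Bool) : List Bool :=
  let k := Nat.find (p := fun k => (w.drop k).reverse = w.drop k)
    ⟨w.length, by simp⟩
  w.take k ++ w.drop k ++ (w.take k).reverse

def psi (v : List Bool) : List Bool := v.foldl (fun w x => palClosure (w ++ [x])) []

def E (v : List Bool) : List Bool := v.map (!·)

def mu (x : Bool) (w : List Bool) : List Bool := w.flatMap (fun y => if y = x then [x] else [x, y])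

def muW : List Bool → List Bool → List Bool
  | [], w => w
  | x :: v, w => mu x (muW v w)

def vN (n : ℕ) : List Bool := (List.range n).map (fun i => decide (i % 2 = 1))

def fibF : ℕ → ℕ
  | 0 => 1
  | 1 => 1
  | n + 2 => fibF (n + 1) + fibF n

def HasPeriod (w : List Bool) (p : ℕ) : Prop :=
  0 < p ∧ ∀ i j (hi : i < w.length) (hj : j < w.length),
    i % p = j % p → w.get ⟨i, hi⟩ = w.get ⟨j, hj⟩

noncomputable def minPeriod (w : List Bool) : ℕ := sInf {p | HasPeriod w p}

def dOp : List Bool → List Bool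
  | x :: y :: u => y :: x :: u
  | w => w

def cOp (v : List Bool) : List Bool := (dOp v.reverse).reverse

def contAux : List ℕ → ℕ
  | [] => 1
  | [a] => a
  | a :: b :: t => a * contAux (b :: t) + contAux t


lemma palClosure_pal (w : List Bool) : (palClosure w).reverse = palClosure w := by
  unfold palClosure
  simp only []
  have hk := Nat.find_spec (p := fun k => (w.drop k).reverse = w.drop k)
    ⟨w.length, by simp⟩
  simp only [List.reverse_append, List.reverse_reverse, hk, List.append_assoc]

lemma prefix_palClosure (w : List Bool) : w <+: palClosure w := by
  unfold palClosure
  simp only []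
  rw [List.take_append_drop]
  exact ⟨_, rfl⟩

lemma psi_append_singleton (v : List Bool) (x : Bool) :
    psi (v ++ [x]) = palClosure (psi v ++ [x]) := by
  unfold psi; rw [List.foldl_append]; rfl

lemma psi_pal (v : List Bool) : (psi v).reverse = psi v := by
  induction v using List.reverseRecOn with
  | nil => rfl
  | append_singleton v x ih => rw [psi_append_singleton]; exact palClosure_pal _

lemma psi_prefix (u t : List Bool) : psi u <+: psi (u ++ t) := by
  induction t using List.reverseRecOn with
  | nil => simp
  | append_singleton t x ih =>
      rw [← List.append_assoc, psi_append_singleton]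
      exact ih.trans (((psi (u ++ t)).prefix_append [x]).trans (prefix_palClosure _))

theorem stmt2 (u v : List Bool) (h : u <+: v) :
    psi u <+: psi v ∧ psi u <:+ psi v := by
  obtain ⟨t, rfl⟩ := h
  have hp := psi_prefix u t
  refine ⟨hp, ?_⟩
  have := List.reverse_suffix.mpr hp
  rwa [psi_pal, psi_pal] at this
end

section
/- For any letter x and word u over {a,b}: ψ(xu) = μ_x(ψ(u)) x. -/
lemma mu_append (x : Bool) (a b : List Bool) : mu x (a ++ b) = mu x a ++ mu x b :=
  List.flatMap_append

lemma mu_cons (x z : Bool) (w : List Bool) :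
    mu x (z :: w) = (if z = x then [x] else [x, z]) ++ mu x w := rfl

lemma mu_single (x z : Bool) : mu x [z] = if z = x then [x] else [x, z] := by
  rw [mu_cons]; simp [mu]

lemma mu_rev (x : Bool) (p : List Bool) :
    mu x p.reverse ++ [x] = x :: (mu x p).reverse := by
  induction p with
  | nil => rfl
  | cons z w ih =>
      have hb : mu x [z] ++ [x] = x :: (mu x [z]).reverse := by
        by_cases hz : z = x <;> simp [mu_single, hz]
      rw [List.reverse_cons]
      calc mu x (w.reverse ++ [z]) ++ [x]
          = mu x w.reverse ++ (mu x [z] ++ [x]) := by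
            rw [mu_append, List.append_assoc]
        _ = (mu x w.reverse ++ [x]) ++ (mu x [z]).reverse := by
            rw [hb]; simp
        _ = x :: ((mu x w).reverse ++ (mu x [z]).reverse) := by rw [ih]; simp
        _ = x :: (mu x (z :: w)).reverse := by
            rw [show (z :: w) = [z] ++ w from rfl, mu_append, List.reverse_append]

lemma mu_head {x z : Bool} {l m : List Bool} (h : mu x l = z :: m) : z = x := by
  cases l with
  | nil => simp [mu] at h
  | cons w l' =>
      rw [mu_cons] at h
      by_cases hw : w = x <;> simp [hw] at h <;> tauto

lemma mu_inj {x : Bool} : ∀ {a b : List Bool}, mu x a = mu x b → a = b := by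
  intro a
  induction a with
  | nil =>
      intro b h
      cases b with
      | nil => rfl
      | cons z b' =>
          rw [mu_cons] at h
          by_cases hz : z = x <;> simp [hz, mu] at h
  | cons z a' ih =>
      intro b h
      cases b with
      | nil =>
          rw [mu_cons] at h
          by_cases hz : z = x <;> simp [hz, mu] at h
      | cons w b' =>
          rw [mu_cons, mu_cons] at h
          by_cases hz : z = x <;> by_cases hw : w = x <;>
            simp only [hz, hw, if_true, if_false, ite_true, ite_false] at h
          · simp at h; rw [hz, hw, ih h]
          · simp at h
            exact absurd (mu_head h) hw
          · simp at h
            exact absurd (mu_head h.symm) hz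
          · simp at h
            obtain ⟨h1, h2⟩ := h
            rw [h1, ih h2]

lemma nu_pal {x : Bool} {p : List Bool} :
    (mu x p ++ [x]).reverse = mu x p ++ [x] ↔ p.reverse = p := by
  constructor
  · intro h
    have h2 : mu x p.reverse ++ [x] = mu x p ++ [x] := by
      rw [mu_rev]
      rw [List.reverse_append] at h
      simpa using h
    exact mu_inj (by simpa using h2)
  · intro h
    have h2 : (mu x p ++ [x]).reverse = x :: (mu x p).reverse := by simp
    rw [h2, ← mu_rev, h]

lemma nu_suffix_mono {x : Bool} {v w : List Bool} (h : v <:+ w) :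
    mu x v ++ [x] <:+ mu x w ++ [x] := by
  obtain ⟨c, hc⟩ := h
  exact ⟨mu x c, by rw [← List.append_assoc, ← mu_append, hc]⟩

lemma nu_suffix {x : Bool} {w : List Bool} : ∀ {t : List Bool},
    t <:+ mu x w ++ [x] → t ≠ [] →
    (∃ v, v <:+ w ∧ t = mu x v ++ [x]) ∨ (∃ v, (!x) :: v <:+ w ∧ t = (!x) :: (mu x v ++ [x])) := by
  induction w with
  | nil =>
      intro t h hne
      left
      refine ⟨[], List.suffix_refl _, ?_⟩
      simp only [mu, List.flatMap_nil, List.nil_append] at h ⊢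
      rcases List.suffix_cons_iff.1 h with h | h
      · exact h
      · simp at h; exact absurd h hne
  | cons z w' ih =>
      intro t h hne
      by_cases hz : z = x
      · subst hz
        rw [mu_cons, if_pos rfl] at h
        simp only [List.cons_append, List.singleton_append] at h
        rcases List.suffix_cons_iff.1 h with h | h
        · left
          refine ⟨z :: w', List.suffix_refl _, ?_⟩
          rw [mu_cons, if_pos rfl, h]; rfl
        · rcases ih h hne with ⟨v, hv, ht⟩ | ⟨v, hv, ht⟩
          · exact Or.inl ⟨v, hv.trans (List.suffix_cons _ _), ht⟩
          · exact Or.inr ⟨v, hv.trans (List.suffix_cons _ _), ht⟩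
      · have hz' : z = !x := by cases z <;> cases x <;> simp_all
        subst hz'
        rw [mu_cons, if_neg hz] at h
        simp only [List.cons_append, List.nil_append] at h
        rcases List.suffix_cons_iff.1 h with h | h
        · left
          refine ⟨(!x) :: w', List.suffix_refl _, ?_⟩
          rw [mu_cons, if_neg hz, h]; rfl
        · rcases List.suffix_cons_iff.1 h with h | h
          · right
            exact ⟨w', List.suffix_refl _, h⟩
          · rcases ih h hne with ⟨v, hv, ht⟩ | ⟨v, hv, ht⟩
            · exact Or.inl ⟨v, hv.trans (List.suffix_cons _ _), ht⟩
            · exact Or.inr ⟨v, hv.trans (List.suffix_cons _ _), ht⟩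

lemma suffix_getLast {t A : List Bool} {x : Bool} (h : t <:+ A ++ [x]) (hne : t ≠ []) :
    t.getLast? = some x := by
  obtain ⟨c, hc⟩ := h
  have h2 := congrArg List.getLast? hc
  rw [List.getLast?_append, List.getLast?_concat] at h2
  rcases ht : t.getLast? with _ | a
  · exact absurd (List.getLast?_eq_none_iff.1 ht) hne
  · rw [ht] at h2; simpa using h2

lemma pal_head {t : List Bool} (h : t.reverse = t) : t.head? = t.getLast? := by
  rw [← List.head?_reverse, h]

lemma palClosure_eq_of (w : List Bool) (k : ℕ)
    (h1 : (w.drop k).reverse = w.drop k)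
    (h2 : ∀ j < k, ¬ (w.drop j).reverse = w.drop j) :
    palClosure w = w.take k ++ w.drop k ++ (w.take k).reverse := by
  have hfind : Nat.find (p := fun k => (w.drop k).reverse = w.drop k)
      ⟨w.length, by simp⟩ = k := (Nat.find_eq_iff _).2 ⟨h1, h2⟩
  unfold palClosure
  rw [hfind]

lemma key1 (x : Bool) (w : List Bool) :
    palClosure (mu x w ++ [x]) = mu x (palClosure w) ++ [x] := by
  have hex : ∃ n, ((w.drop n).reverse = w.drop n) := ⟨w.length, by simp⟩
  set k := Nat.find hex with hkdef
  have hk1 : (w.drop k).reverse = w.drop k := Nat.find_spec hex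
  have hk2 : ∀ j < k, ¬ (w.drop j).reverse = w.drop j := fun j hj => Nat.find_min hex hj
  have hkle : k ≤ w.length := Nat.find_le (by simp)
  have hR : palClosure w = w.take k ++ w.drop k ++ (w.take k).reverse :=
    palClosure_eq_of w k hk1 hk2
  set A := mu x (w.take k) with hA
  set s := w.drop k with hs
  set S := mu x s ++ [x] with hS
  have hW : mu x w ++ [x] = A ++ S := by
    rw [hA, hS, ← List.append_assoc, ← mu_append, List.take_append_drop]
  have hSpal : S.reverse = S := nu_pal.2 hk1
  have h1' : ((mu x w ++ [x]).drop A.length).reverse = (mu x w ++ [x]).drop A.length := by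
    rw [hW, List.drop_left]; exact hSpal
  have h2' : ∀ j < A.length, ¬ ((mu x w ++ [x]).drop j).reverse = (mu x w ++ [x]).drop j := by
    intro j hj ht
    set t := (mu x w ++ [x]).drop j with htdef
    have htsuf : t <:+ mu x w ++ [x] := List.drop_suffix _ _
    have htlen : t.length = A.length + S.length - j := by
      rw [htdef, List.length_drop, hW, List.length_append]
    have hSpos : 0 < S.length := by rw [hS]; simp
    have htlen2 : S.length < t.length := by omega
    have htne : t ≠ [] := List.ne_nil_of_length_pos (by omega)
    have hlast : t.getLast? = some x := suffix_getLast htsuf htne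
    have hhead : t.head? = some x := by rw [pal_head ht, hlast]
    rcases nu_suffix htsuf htne with ⟨v, hv, htv⟩ | ⟨v, hv, htv⟩
    · have hvpal : v.reverse = v := nu_pal.1 (htv ▸ ht)
      have hs_suf : s <:+ w := List.drop_suffix _ _
      rcases List.suffix_or_suffix_of_suffix hv hs_suf with hvs | hsv
      · have hle : (mu x v ++ [x]).length ≤ S.length :=
          (nu_suffix_mono (x := x) hvs).length_le
        rw [htv] at htlen2
        omega
      · have hne' : v ≠ s := by
          intro he
          rw [htv, he] at htlen2
          exact absurd rfl (ne_of_lt htlen2)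
        have hlt : s.length < v.length :=
          lt_of_le_of_ne hsv.length_le (fun he => hne' (hsv.eq_of_length he).symm)
        have hdj' : w.drop (w.length - v.length) = v := (List.suffix_iff_eq_drop.1 hv).symm
        have hslen : s.length = w.length - k := by rw [hs, List.length_drop]
        have hj'k : w.length - v.length < k := by
          have hvle : v.length ≤ w.length := hv.length_le
          omega
        exact hk2 _ hj'k (by rw [hdj']; exact hvpal)
    · rw [htv] at hhead
      simp at hhead
  have hL := palClosure_eq_of (mu x w ++ [x]) A.length h1' h2'
  rw [hL, hR]
  rw [hW, List.take_left, List.drop_left]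
  rw [mu_append, mu_append]
  rw [List.append_assoc (mu x (List.take k w) ++ mu x s), mu_rev]
  simp [hA, hS, List.append_assoc]

lemma nu_head (x : Bool) (v : List Bool) : (mu x v ++ [x]).head? = some x := by
  rcases hm : mu x v with _ | ⟨z, m⟩
  · simp
  · have := mu_head hm
    subst this
    simp

lemma pal_mid {y : Bool} {M : List Bool}
    (h : ((y :: (M ++ [y]))).reverse = y :: (M ++ [y])) : M.reverse = M := by
  rw [List.reverse_cons, List.reverse_append] at h
  simp only [List.reverse_cons, List.reverse_nil, List.nil_append, List.singleton_append] at h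
  have h2 : M.reverse ++ [y] = M ++ [y] := by
    injection h with _ h2
  exact List.append_cancel_right h2

lemma pal_suffix_structure {x : Bool} {p : List Bool} {j : ℕ}
    (hj : j < (mu x p ++ [x]).length)
    (ht : (((mu x p ++ [x]) ++ [!x]).drop j).reverse = ((mu x p ++ [x]) ++ [!x]).drop j) :
    ∃ v', ((!x) :: v') <:+ p ∧ v'.reverse = v' ∧
      ((mu x p ++ [x]) ++ [!x]).drop j = (!x) :: ((mu x v' ++ [x]) ++ [!x]) := by
  have hdj : (((mu x p ++ [x]) ++ [!x]).drop j) = (mu x p ++ [x]).drop j ++ [!x] :=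
    List.drop_append_of_le_length (le_of_lt hj)
  have ht0ne : (mu x p ++ [x]).drop j ≠ [] := by
    apply List.ne_nil_of_length_pos
    rw [List.length_drop]
    omega
  have ht' : ((mu x p ++ [x]).drop j ++ [!x]).reverse = (mu x p ++ [x]).drop j ++ [!x] := by
    rw [← hdj]; exact ht
  have hhead : ((mu x p ++ [x]).drop j ++ [!x]).head? = some (!x) := by
    rw [pal_head ht', List.getLast?_concat]
  have hhead0 : ((mu x p ++ [x]).drop j).head? = some (!x) := by
    rcases h0 : (mu x p ++ [x]).drop j with _ | ⟨a, t0'⟩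
    · exact absurd h0 ht0ne
    · rw [h0] at hhead; simpa using hhead
  rcases nu_suffix (List.drop_suffix j _) ht0ne with ⟨v, _, htv⟩ | ⟨v', hv', htv'⟩
  · rw [htv, nu_head] at hhead0
    simp at hhead0
  · refine ⟨v', hv', ?_, ?_⟩
    · apply nu_pal.1
      apply pal_mid (y := !x) (M := mu x v' ++ [x])
      rw [hdj, htv'] at ht
      simpa using ht
    · rw [hdj, htv']
      simp

lemma drop_of_suffix_snoc {y : Bool} {p v' : List Bool} (h : (y :: v') <:+ p)
    (hp : v'.reverse = v') :
    ∃ j₀, j₀ + v'.length + 1 = p.length ∧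
      ((p ++ [y]).drop j₀).reverse = (p ++ [y]).drop j₀ := by
  obtain ⟨c, hc⟩ := h
  refine ⟨c.length, ?_, ?_⟩
  · have := congrArg List.length hc
    simp at this
    omega
  · have hsplit : p ++ [y] = c ++ ((y :: v') ++ [y]) := by rw [← hc]; simp
    rw [hsplit, List.drop_left' rfl]
    simp [hp]

lemma pal_mid' {y : Bool} {M : List Bool} (h : M.reverse = M) :
    ((y :: M) ++ [y]).reverse = (y :: M) ++ [y] := by
  simp only [List.cons_append, List.reverse_cons, List.reverse_append,
    List.reverse_cons, List.reverse_nil, List.nil_append, List.singleton_append, h]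

lemma key2 (x : Bool) (p : List Bool) :
    palClosure ((mu x p ++ [x]) ++ [!x]) = mu x (palClosure (p ++ [!x])) ++ [x] := by
  have hyx : ¬ (!x) = x := by cases x <;> simp
  have hex : ∃ n, (((p ++ [!x]).drop n).reverse = (p ++ [!x]).drop n) :=
    ⟨(p ++ [!x]).length, by simp⟩
  set k := Nat.find hex with hkdef
  have hk1 : (((p ++ [!x]).drop k)).reverse = (p ++ [!x]).drop k := Nat.find_spec hex
  have hk2 : ∀ j < k, ¬ ((p ++ [!x]).drop j).reverse = (p ++ [!x]).drop j :=
    fun j hj => Nat.find_min hex hj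
  have hkp : k ≤ p.length := by
    by_contra hcon
    push_neg at hcon
    exact hk2 p.length hcon (by rw [List.drop_left]; simp)
  have hR : palClosure (p ++ [!x]) =
      (p ++ [!x]).take k ++ (p ++ [!x]).drop k ++ ((p ++ [!x]).take k).reverse :=
    palClosure_eq_of _ k hk1 hk2
  have htake : (p ++ [!x]).take k = p.take k := List.take_append_of_le_length hkp
  rcases eq_or_lt_of_le hkp with hkeq | hklt
  · have hdropk : (p ++ [!x]).drop k = [!x] := by rw [hkeq, List.drop_left]
    have htakek : (p ++ [!x]).take k = p := by rw [hkeq, List.take_left]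
    have h1' : (((mu x p ++ [x]) ++ [!x]).drop (mu x p ++ [x]).length).reverse
        = ((mu x p ++ [x]) ++ [!x]).drop (mu x p ++ [x]).length := by
      rw [List.drop_left]
      simp
    have h2' : ∀ j < (mu x p ++ [x]).length,
        ¬ (((mu x p ++ [x]) ++ [!x]).drop j).reverse = ((mu x p ++ [x]) ++ [!x]).drop j := by
      intro j hj ht
      obtain ⟨v', hv', hvpal, _⟩ := pal_suffix_structure hj ht
      obtain ⟨j₀, hj₀len, hj₀pal⟩ := drop_of_suffix_snoc hv' hvpal
      exact hk2 j₀ (by omega) hj₀pal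
    have hL := palClosure_eq_of _ _ h1' h2'
    rw [hL, List.take_left, List.drop_left, hR, htakek, hdropk]
    rw [mu_append, mu_append]
    rw [List.append_assoc (mu x p ++ mu x [!x]), mu_rev]
    simp [mu_single, hyx, List.append_assoc]
  · have hdropk : (p ++ [!x]).drop k = p.drop k ++ [!x] := List.drop_append_of_le_length hkp
    have hdkne : p.drop k ≠ [] := List.ne_nil_of_length_pos (by rw [List.length_drop]; omega)
    obtain ⟨v, hv⟩ : ∃ v, p.drop k = (!x) :: v := by
      have hlast : ((p.drop k) ++ [!x]).getLast? = some (!x) := List.getLast?_concat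
      have hh : ((p.drop k) ++ [!x]).head? = some (!x) := by
        rw [pal_head (by rw [← hdropk]; exact hk1), hlast]
      rcases h0 : p.drop k with _ | ⟨a, v⟩
      · exact absurd h0 hdkne
      · rw [h0] at hh
        simp at hh
        exact ⟨v, by rw [hh]⟩
    have hvpal : v.reverse = v := by
      apply pal_mid (y := !x) (M := v)
      rw [hdropk, hv] at hk1
      simpa using hk1
    have hyv : (!x) :: v <:+ p := by rw [← hv]; exact List.drop_suffix k p
    have hq : p.take k ++ ((!x) :: v) = p := by rw [← hv]; exact List.take_append_drop k p
    have hqlen : (p.take k).length = k := by rw [List.length_take]; omega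
    have hmu_p : mu x p = mu x (p.take k) ++ (x :: (!x) :: mu x v) := by
      conv_lhs => rw [← hq]
      rw [mu_append, mu_cons, if_neg hyx]
      simp
    have hWsplit : (mu x p ++ [x]) ++ [!x]
        = (mu x (p.take k) ++ [x]) ++ (((!x) :: (mu x v ++ [x])) ++ [!x]) := by
      rw [hmu_p]; simp
    set K := (mu x (p.take k)).length + 1 with hK
    have hKlen : (mu x (p.take k) ++ [x]).length = K := by simp [hK]
    have h1' : (((mu x p ++ [x]) ++ [!x]).drop K).reverse = ((mu x p ++ [x]) ++ [!x]).drop K := by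
      rw [hWsplit, List.drop_left' hKlen]
      exact pal_mid' (nu_pal.2 hvpal)
    have hνlen : K ≤ (mu x p ++ [x]).length := by
      rw [hmu_p]
      simp [hK]
    have h2' : ∀ j < K,
        ¬ (((mu x p ++ [x]) ++ [!x]).drop j).reverse = ((mu x p ++ [x]) ++ [!x]).drop j := by
      intro j hj ht
      have hjν : j < (mu x p ++ [x]).length := lt_of_lt_of_le hj hνlen
      obtain ⟨v', hv', hvpal', hteq⟩ := pal_suffix_structure hjν ht
      have hlen_t : ((mu x p ++ [x]) ++ [!x]).length - j = (mu x v').length + 3 := by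
        have h5 := congrArg List.length hteq
        rw [List.length_drop] at h5
        simp at h5 ⊢
        omega
      have hWlen : ((mu x p ++ [x]) ++ [!x]).length
          = (mu x (p.take k)).length + (mu x v).length + 4 := by
        rw [hmu_p]; simp; omega
      have hlen_gt : (mu x v).length < (mu x v').length := by omega
      rcases List.suffix_or_suffix_of_suffix hv' hyv with hcase | hcase
      · have h6 := (nu_suffix_mono (x := x) hcase).length_le
        have e1 : (mu x ((!x) :: v')).length = (mu x v').length + 2 := by
          rw [mu_cons, if_neg hyx]; simp
        have e2 : (mu x ((!x) :: v)).length = (mu x v).length + 2 := by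
          rw [mu_cons, if_neg hyx]; simp
        simp at h6
        omega
      · rcases List.suffix_cons_iff.1 hcase with heq | hsuf
        · have hvv : v = v' := by injection heq
          rw [hvv] at hlen_gt
          exact lt_irrefl _ hlen_gt
        · obtain ⟨j₀, hj₀len, hj₀pal⟩ := drop_of_suffix_snoc hv' hvpal'
          have hvlen : v.length + 1 ≤ v'.length := by
            have h7 := hsuf.length_le
            simp at h7
            omega
          have hklen : k + v.length + 1 = p.length := by
            have h8 := congrArg List.length hq
            simp [hqlen] at h8
            omega
          exact hk2 j₀ (by omega) hj₀pal
    have hL := palClosure_eq_of _ K h1' h2'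
    rw [hL, hR]
    rw [hWsplit, List.take_left' hKlen, List.drop_left' hKlen]
    rw [htake, hdropk, hv]
    rw [mu_append]
    conv_rhs => rw [List.append_assoc, mu_rev]
    simp [mu_append, mu_cons, hyx, List.append_assoc]
    rfl

lemma key (x y : Bool) (p : List Bool) :
    palClosure ((mu x p ++ [x]) ++ [y]) = mu x (palClosure (p ++ [y])) ++ [x] := by
  by_cases h : y = x
  · subst h
    have h2 : mu y (p ++ [y]) = mu y p ++ [y] := by
      rw [mu_append, mu_single, if_pos rfl]
    rw [← h2, key1]
  · have h3 : y = !x := by cases x <;> cases y <;> simp_all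
    subst h3
    exact key2 x p

lemma psi_snoc (v : List Bool) (y : Bool) : psi (v ++ [y]) = palClosure (psi v ++ [y]) := by
  simp [psi, List.foldl_append]


theorem stmt7 (x : Bool) (u : List Bool) : psi (x :: u) = mu x (psi u) ++ [x] := by
  induction u using List.reverseRecOn with
  | nil =>
      show psi [x] = mu x (psi []) ++ [x]
      have h0 : psi [x] = palClosure [x] := by simp [psi]
      have h1 : palClosure [x] = [x] := by
        have h2 := palClosure_eq_of [x] 0 (by simp) (fun j hj => absurd hj (Nat.not_lt_zero j))
        simpa using h2
      simp [h0, h1, psi, mu]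
  | append_singleton u' y ih =>
      rw [show x :: (u' ++ [y]) = (x :: u') ++ [y] from rfl, psi_snoc, ih, psi_snoc]
      exact key x y (psi u')
end
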